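/- For any B, B' ∈ GL_n(ℝ), one has Ker L^Ψ_B = Img L^Φ_B if and only if Ker L^Ψ_{B'} = Img L^Φ_{B'}. -/

import Mathlib

open scoped RealInnerProductSpace

noncomputable section

/-- `ℝ^n` with the Euclidean inner product and norm. -/
abbrev E (n : ℕ) : Type := EuclideanSpace ℝ (Fin n)

/-- The symmetric bilinear map `Q_v(ξ,η) = ⟨ξ,η⟩·v − ⟨ξ,v⟩·η − ⟨η,v⟩·ξ`. -/
def Qv {n : ℕ} (v ξ η : E n) : E n := ⟪ξ, η⟫ • v - ⟪ξ, v⟫ • η - ⟪η, v⟫ • ξ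

/-- The bracket `[Q,Q']` of two (symmetric bilinear) maps. -/
def brk {n : ℕ} (Q Q' : E n → E n → E n) (ξ η θ : E n) : E n :=
  (Q ξ (Q' η θ) + Q η (Q' θ ξ) + Q θ (Q' ξ η))
    - (Q' ξ (Q η θ) + Q' η (Q θ ξ) + Q' θ (Q ξ η))

/-- A map `ℝ^n × ℝ^n → ℝ^n` is a symmetric bilinear map. -/
def IsSymmBilin {n : ℕ} (q : E n → E n → E n) : Prop :=
  (∀ ξ η, q ξ η = q η ξ) ∧ ∀ ξ, IsLinearMap ℝ (q ξ)

/-- The standard basis vectors `e_1, …, e_n` of `ℝ^n`. -/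
def stdE (n : ℕ) (i : Fin n) : E n := EuclideanSpace.single i 1

/-- The `i`-th component of `L^Φ_B (A', B')`, where `v = v_i` is the `i`-th column of `B`
and `ω = ω_i` the `i`-th column of `B'`. -/
def LPhiC {n : ℕ} (A' : E n →ₗ[ℝ] E n) (v ω : E n) (ξ η : E n) : E n :=
  A' (Qv v ξ η) - Qv v (A' ξ) η - Qv v ξ (A' η) + Qv ω ξ η

/-- `(q_1,…,q_n)` lies in the kernel of `L^Ψ_B`, where `v i` are the columns of `B`. -/
def KerPsi {n : ℕ} (v : Fin n → E n) (q : Fin n → E n → E n → E n) : Prop :=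
  ∀ i j : Fin n, i < j → ∀ ξ η θ : E n,
    brk (q i) (Qv (v j)) ξ η θ = brk (q j) (Qv (v i)) ξ η θ

/-- `(q_1,…,q_n)` lies in the subspace `W`; `i0` is the index of the first coordinate. -/
def memW {n : ℕ} (i0 : Fin n) (q : Fin n → E n → E n → E n) : Prop :=
  (∀ j, q j (stdE n j) (stdE n j) = 0) ∧
  (∀ i j, ⟪stdE n i, q j (stdE n i) (stdE n i)⟫ + ⟪stdE n j, q i (stdE n j) (stdE n j)⟫ = 0) ∧
  (∀ j, ⟪stdE n i0, q i0 (stdE n j) (stdE n j)⟫ = 0)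

/- ### Auxiliary lemmas for the change-of-basis argument -/

variable {n : ℕ}

lemma Qv_comb (w : Fin n → E n) (c : Fin n → ℝ) (ξ η : E n) :
    Qv (∑ k, c k • w k) ξ η = ∑ k, c k • Qv (w k) ξ η := by
  simp only [Qv, inner_sum, real_inner_smul_right, Finset.sum_smul, Finset.smul_sum,
    smul_smul, smul_sub, Finset.sum_sub_distrib]
  simp [mul_comm]

lemma Qv_comb_right (v ξ : E n) (c : Fin n → ℝ) (w : Fin n → E n) :
    Qv v ξ (∑ k, c k • w k) = ∑ k, c k • Qv v ξ (w k) := by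
  simp only [Qv, inner_sum, real_inner_smul_right, sum_inner, real_inner_smul_left,
    Finset.sum_smul, Finset.smul_sum, smul_smul, smul_sub, Finset.sum_sub_distrib]
  simp [mul_comm]

lemma bilin_comb_right {q : E n → E n → E n} (hq : IsSymmBilin q) (ξ : E n)
    (c : Fin n → ℝ) (w : Fin n → E n) :
    q ξ (∑ k, c k • w k) = ∑ k, c k • q ξ (w k) := by
  have h := map_sum (IsLinearMap.mk' _ (hq.2 ξ)) (fun k => c k • w k) Finset.univ
  simp only [IsLinearMap.mk'_apply, map_smul] at h
  exact h

lemma brk_comb (q : Fin n → E n → E n → E n) (hq : ∀ k, IsSymmBilin (q k))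
    (w : Fin n → E n) (c d : Fin n → ℝ) (ξ η θ : E n) :
    brk (fun ξ η => ∑ k, c k • q k ξ η) (Qv (∑ l, d l • w l)) ξ η θ
      = ∑ k, ∑ l, (c k * d l) • brk (q k) (Qv (w l)) ξ η θ := by
  have h1 : ∀ a b e : E n, (∑ k, c k • q k a (Qv (∑ l, d l • w l) b e))
      = ∑ k, ∑ l, (c k * d l) • q k a (Qv (w l) b e) := by
    intro a b e
    refine Finset.sum_congr rfl fun k _ => ?_
    rw [Qv_comb, bilin_comb_right (hq k), Finset.smul_sum]
    exact Finset.sum_congr rfl fun l _ => by rw [smul_smul]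
  have h2 : ∀ a b e : E n, Qv (∑ l, d l • w l) a (∑ k, c k • q k b e)
      = ∑ k, ∑ l, (c k * d l) • Qv (w l) a (q k b e) := by
    intro a b e
    rw [Qv_comb]
    have hl : ∀ l, d l • Qv (w l) a (∑ k, c k • q k b e)
        = ∑ k, (c k * d l) • Qv (w l) a (q k b e) := by
      intro l
      rw [Qv_comb_right, Finset.smul_sum]
      exact Finset.sum_congr rfl fun k _ => by rw [smul_smul, mul_comm]
    rw [Finset.sum_congr rfl fun l _ => hl l]
    exact Finset.sum_comm
  simp only [brk]
  rw [h1 ξ η θ, h1 η θ ξ, h1 θ ξ η, h2 ξ η θ, h2 η θ ξ, h2 θ ξ η]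
  simp only [smul_sub, smul_add, Finset.sum_sub_distrib, Finset.sum_add_distrib]

lemma LPhiC_comb (A' : E n →ₗ[ℝ] E n) (w ω : Fin n → E n) (c : Fin n → ℝ) (ξ η : E n) :
    LPhiC A' (∑ k, c k • w k) (∑ k, c k • ω k) ξ η
      = ∑ k, c k • LPhiC A' (w k) (ω k) ξ η := by
  simp only [LPhiC, Qv_comb, map_sum, map_smul, smul_sub, smul_add,
    Finset.sum_sub_distrib, Finset.sum_add_distrib]

lemma kerPsi_iff_all (v : Fin n → E n) (q : Fin n → E n → E n → E n) :
    KerPsi v q ↔ ∀ i j : Fin n, ∀ ξ η θ : E n,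
      brk (q i) (Qv (v j)) ξ η θ = brk (q j) (Qv (v i)) ξ η θ := by
  constructor
  · intro h i j ξ η θ
    rcases lt_trichotomy i j with hij | hij | hij
    · exact h i j hij ξ η θ
    · subst hij; rfl
    · exact (h j i hij ξ η θ).symm
  · intro h i j _ ξ η θ
    exact h i j ξ η θ

lemma kerAll_comb (v : Fin n → E n) (q : Fin n → E n → E n → E n)
    (hq : ∀ k, IsSymmBilin (q k)) (K : Fin n → Fin n → ℝ)
    (hAll : ∀ k l : Fin n, ∀ ξ η θ : E n,
      brk (q k) (Qv (v l)) ξ η θ = brk (q l) (Qv (v k)) ξ η θ)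
    (i j : Fin n) (ξ η θ : E n) :
    brk (fun ξ η => ∑ k, K k i • q k ξ η) (Qv (∑ l, K l j • v l)) ξ η θ
      = brk (fun ξ η => ∑ k, K k j • q k ξ η) (Qv (∑ l, K l i • v l)) ξ η θ := by
  rw [brk_comb q hq v _ _ ξ η θ, brk_comb q hq v _ _ ξ η θ]
  rw [Finset.sum_comm]
  refine Finset.sum_congr rfl fun l _ => Finset.sum_congr rfl fun k _ => ?_
  rw [hAll k l ξ η θ, mul_comm]

/-- The statement "Ker L^Ψ_B = Img L^Φ_B" for the basis with columns `v`. -/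
def StmtFor {n : ℕ} (v : Fin n → E n) : Prop :=
  ∀ q : Fin n → E n → E n → E n, (∀ i, IsSymmBilin (q i)) →
    (KerPsi v q ↔ ∃ (A' : E n →ₗ[ℝ] E n) (ω : Fin n → E n),
      ∀ i ξ η, q i ξ η = LPhiC A' (v i) (ω i) ξ η)

lemma stmt_mono (vA vB : Fin n → E n) (C D : Fin n → Fin n → ℝ)
    (hBA : ∀ i, vB i = ∑ k, C k i • vA k)
    (hAB : ∀ k, vA k = ∑ i, D i k • vB i)
    (hDC : ∀ j i, (∑ k, D j k * C k i) = if j = i then (1 : ℝ) else 0)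
    (h : StmtFor vA) : StmtFor vB := by
  intro q' hq'
  set q : Fin n → E n → E n → E n := fun k ξ η => ∑ j, D j k • q' j ξ η with hqdef
  have hq : ∀ k, IsSymmBilin (q k) := by
    intro k
    constructor
    · intro ξ η
      exact Finset.sum_congr rfl fun j _ => by rw [(hq' j).1]
    · intro ξ
      constructor
      · intro a b
        simp only [hqdef]
        rw [← Finset.sum_add_distrib]
        refine Finset.sum_congr rfl fun j _ => ?_
        rw [(hq' j).2 ξ |>.map_add, smul_add]
      · intro c x
        simp only [hqdef]
        rw [Finset.smul_sum]
        refine Finset.sum_congr rfl fun j _ => ?_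
        rw [(hq' j).2 ξ |>.map_smul, smul_comm]
  have hrec : ∀ i ξ η, q' i ξ η = ∑ k, C k i • q k ξ η := by
    intro i ξ η
    have step : ∑ k, C k i • q k ξ η = ∑ j, (∑ k, D j k * C k i) • q' j ξ η :=
      calc ∑ k, C k i • q k ξ η
          = ∑ k, ∑ j, (D j k * C k i) • q' j ξ η := by
            refine Finset.sum_congr rfl fun k _ => ?_
            rw [show q k ξ η = ∑ j, D j k • q' j ξ η from rfl, Finset.smul_sum]
            exact Finset.sum_congr rfl fun j _ => by rw [smul_smul, mul_comm]
        _ = ∑ j, ∑ k, (D j k * C k i) • q' j ξ η := Finset.sum_comm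
        _ = ∑ j, (∑ k, D j k * C k i) • q' j ξ η := by
            exact Finset.sum_congr rfl fun j _ => (Finset.sum_smul).symm
    rw [step]
    simp [hDC]
  constructor
  · intro hK
    have hallB := (kerPsi_iff_all vB q').1 hK
    have hKA : KerPsi vA q := by
      rw [kerPsi_iff_all]
      intro k l ξ η θ
      have h2 := kerAll_comb vB q' hq' D hallB k l ξ η θ
      rw [← hAB k, ← hAB l] at h2
      exact h2
    obtain ⟨A', ω, hω⟩ := (h q hq).1 hKA
    refine ⟨A', fun i => ∑ k, C k i • ω k, fun i ξ η => ?_⟩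
    rw [hrec i ξ η, hBA i, LPhiC_comb]
    exact Finset.sum_congr rfl fun k _ => by rw [hω k ξ η]
  · rintro ⟨A', ω', hω'⟩
    have hKA : KerPsi vA q := by
      refine (h q hq).2 ⟨A', fun k => ∑ j, D j k • ω' j, fun k ξ η => ?_⟩
      rw [show q k ξ η = ∑ j, D j k • q' j ξ η from rfl, hAB k, LPhiC_comb]
      exact Finset.sum_congr rfl fun j _ => by rw [hω' j ξ η]
    have hallA := (kerPsi_iff_all vA q).1 hKA
    rw [kerPsi_iff_all]
    intro i j ξ η θ
    have hqi : ∀ m : Fin n, q' m = fun ξ η => ∑ k, C k m • q k ξ η := by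
      intro m; funext a b; exact hrec m a b
    rw [hqi i, hqi j, hBA i, hBA j]
    exact kerAll_comb vA q hq C hallA i j ξ η θ

/-- Lemma `lemma:standard`: for any two bases `B, B' ∈ GL_n(ℝ)`,
`Ker L^Ψ_B = Img L^Φ_B` holds iff `Ker L^Ψ_{B'} = Img L^Φ_{B'}` holds. -/
theorem stmt3 {n : ℕ} (v v' : Fin n → E n)
    (hv : LinearIndependent ℝ v) (hv' : LinearIndependent ℝ v') :
    (∀ q : Fin n → E n → E n → E n, (∀ i, IsSymmBilin (q i)) →
      (KerPsi v q ↔ ∃ (A' : E n →ₗ[ℝ] E n) (ω : Fin n → E n),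
        ∀ i ξ η, q i ξ η = LPhiC A' (v i) (ω i) ξ η)) ↔
    (∀ q : Fin n → E n → E n → E n, (∀ i, IsSymmBilin (q i)) →
      (KerPsi v' q ↔ ∃ (A' : E n →ₗ[ℝ] E n) (ω : Fin n → E n),
        ∀ i ξ η, q i ξ η = LPhiC A' (v' i) (ω i) ξ η)) := by
  have key : ∀ (w w' : Fin n → E n), LinearIndependent ℝ w → LinearIndependent ℝ w' →
      StmtFor w → StmtFor w' := by
    intro w w' hw hw' hst
    have hcard : Fintype.card (Fin n) = Module.finrank ℝ (E n) := by
      simp [finrank_euclideanSpace]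
    let b : Module.Basis (Fin n) ℝ (E n) :=
      Module.Basis.mk hw (hw.span_eq_top_of_card_eq_finrank' hcard).ge
    let b' : Module.Basis (Fin n) ℝ (E n) :=
      Module.Basis.mk hw' (hw'.span_eq_top_of_card_eq_finrank' hcard).ge
    have hb : ∀ k, b k = w k := fun k => Module.Basis.mk_apply _ _ k
    have hb' : ∀ k, b' k = w' k := fun k => Module.Basis.mk_apply _ _ k
    have hBA : ∀ i, w' i = ∑ k, (b.repr (w' i) k) • w k := by
      intro i
      conv_lhs => rw [← b.sum_repr (w' i)]
      exact Finset.sum_congr rfl fun k _ => by rw [hb]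
    have hAB : ∀ k, w k = ∑ i, (b'.repr (w k) i) • w' i := by
      intro k
      conv_lhs => rw [← b'.sum_repr (w k)]
      exact Finset.sum_congr rfl fun i _ => by rw [hb']
    refine stmt_mono w w' (fun k i => b.repr (w' i) k) (fun i k => b'.repr (w k) i)
      hBA hAB ?_ hst
    intro j i
    have h2 : b'.repr (w' i) j = ∑ k, (b.repr (w' i) k) * b'.repr (w k) j := by
      conv_lhs => rw [← b.sum_repr (w' i)]
      rw [map_sum, Finsupp.finset_sum_apply]
      refine Finset.sum_congr rfl fun k _ => ?_
      rw [map_smul, Finsupp.smul_apply, smul_eq_mul, hb k]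
    have h3 : b'.repr (w' i) j = if j = i then (1 : ℝ) else 0 := by
      rw [← hb' i, b'.repr_self, Finsupp.single_apply]
      simp [eq_comm]
    rw [← h3, h2]
    exact Finset.sum_congr rfl fun k _ => mul_comm _ _
  exact ⟨fun h => key v v' hv hv' h, fun h => key v' v hv' hv h⟩
end
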